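/- Let k ≥ 1, t ≥ 1, and n ≥ 2. Then γ_{[k]R}(C_{6t} □ P_n) ≤ t(⌈4n/3⌉(k+1) + (k+1)) if n ≡ 0 (mod 3); γ_{[k]R}(C_{6t} □ P_n) ≤ t·⌈4n/3⌉(k+1) if n ≡ 1 (mod 3); and γ_{[k]R}(C_{6t} □ P_n) ≤ t(⌈4n/3⌉(k+1) + k) if n ≡ 2 (mod 3). -/

import Mathlib

open Finset
open scoped Classical

/-- The cylindrical grid `C_m □ P_n`: the Cartesian (box) product of the
cycle on `m` vertices with the path on `n` vertices. -/
def cylGrid (m n : ℕ) : SimpleGraph (Fin m × Fin n) :=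
  (SimpleGraph.cycleGraph m).boxProd (SimpleGraph.pathGraph n)

/-- `f : V → ℕ` is a `[k]`-Roman dominating function on `G`:
values lie in `{0,…,k+1}`, and every vertex `v` with `f v < k` satisfies
`f(N[v]) ≥ k + |AN(v)|`, where `AN(v)` is the set of neighbors of `v`
with positive label. -/
def IsKRomanDF {V : Type*} [Fintype V] (G : SimpleGraph V) (k : ℕ) (f : V → ℕ) : Prop :=
  (∀ v, f v ≤ k + 1) ∧
  (∀ v, f v < k →
    k + (Finset.univ.filter fun u => G.Adj v u ∧ 0 < f u).card ≤
      f v + ∑ u ∈ Finset.univ.filter (fun u => G.Adj v u), f u)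

/-- The `[k]`-Roman domination number: the minimum total weight of a
`[k]`-Roman dominating function. -/
noncomputable def gammaKR {V : Type*} [Fintype V] (G : SimpleGraph V) (k : ℕ) : ℕ :=
  sInf { w : ℕ | ∃ f : V → ℕ, IsKRomanDF G k f ∧ w = ∑ v, f v }

/-- The packing number: the maximum cardinality of a set of vertices whose
closed neighborhoods are pairwise disjoint. -/
noncomputable def packingNumber {V : Type*} [Fintype V] (G : SimpleGraph V) : ℕ :=
  sSup { w : ℕ | ∃ D : Set V,
    (D.Pairwise fun u v =>
      Disjoint (insert u (G.neighborSet u)) (insert v (G.neighborSet v))) ∧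
    w = D.ncard }

def base6 (a b : ℕ) : Bool :=
  match b with
  | 0 => decide (a = 2 ∨ a = 4)
  | 1 => decide (a = 0)
  | 2 => decide (a = 3)
  | 3 => decide (a = 1 ∨ a = 5)
  | 4 => decide (a = 3)
  | 5 => decide (a = 0)
  | _ => false

def colD (n a j : ℕ) : Bool :=
  if n = 3 then decide ((j = 1 ∧ (a = 2 ∨ a = 3 ∨ a = 4)) ∨ ((j = 0 ∨ j = 2) ∧ a = 0))
  else if n % 3 = 0 ∧ j = 0 then
    (if n % 6 = 0 then decide (a = 0 ∨ a = 2) else decide (a = 3 ∨ a = 5))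
  else if n % 3 = 0 ∧ j = 1 then
    (if n % 6 = 0 then decide (a = 4) else decide (a = 1))
  else base6 a ((n - 1 - j) % 6)

def colS (n a j : ℕ) : Bool :=
  decide (j = 0 ∧ ((n % 6 = 2 ∧ a = 3) ∨ (n % 6 = 5 ∧ a = 0)))

def Ehead (m a j : ℕ) : Bool :=
  if m % 3 = 0 ∧ j = 0 then
    (if m = 0 then decide (a = 0 ∨ a = 2) else decide (a = 3 ∨ a = 5))
  else if m % 3 = 0 ∧ j = 1 then
    (if m = 0 then decide (a = 4) else decide (a = 1))
  else base6 a ((m + 5 - j) % 6)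

lemma base6_dom : ∀ a < 6, ∀ b < 6, base6 a b = false →
    (base6 ((a+1)%6) b || base6 ((a+5)%6) b ||
     (decide (b ≠ 0) && base6 a ((b+5)%6)) || base6 a ((b+1)%6)) = true := by decide

lemma Ehead_dom : ∀ m < 6, ∀ a < 6, ∀ j < 3,
    Ehead m a j = false →
    decide (j = 0 ∧ ((m = 2 ∧ a = 3) ∨ (m = 5 ∧ a = 0))) = false →
    (Ehead m ((a+1)%6) j || Ehead m ((a+5)%6) j || Ehead m a (j+1)
      || (decide (0 < j) && Ehead m a (j-1))) = true := by decide

lemma colD_eq_Ehead {n a j : ℕ} (hn : n ≠ 3) (hj : j ≤ 5) (hjn : j < n) :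
    colD n a j = Ehead (n % 6) a j := by
  unfold colD Ehead
  rw [if_neg hn]
  have h1 : n % 3 = n % 6 % 3 := (Nat.mod_mod_of_dvd n (by norm_num)).symm
  have h2' : (n - 1 - j) % 6 = (n % 6 + 5 - j) % 6 := by omega
  rw [h1, h2']

lemma colD_eq_base {n a j : ℕ} (hn : n ≠ 3) (hj : 2 ≤ j) :
    colD n a j = base6 a ((n - 1 - j) % 6) := by
  unfold colD
  rw [if_neg hn, if_neg (by rintro ⟨-, h⟩; omega), if_neg (by rintro ⟨-, h⟩; omega)]

lemma colD_dom {n : ℕ} (hn : 2 ≤ n) :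
    ∀ a < 6, ∀ j < n, colD n a j = false → colS n a j = false →
    (colD n ((a+1)%6) j = true ∨ colD n ((a+5)%6) j = true ∨
     (j+1 < n ∧ colD n a (j+1) = true) ∨ (0 < j ∧ colD n a (j-1) = true)) := by
  by_cases hbig : n < 14
  · have H : ∀ a < 6, ∀ j < n,
        (colD n a j || colS n a j || colD n ((a+1)%6) j || colD n ((a+5)%6) j ||
         (decide (j+1 < n) && colD n a (j+1)) || (decide (0 < j) && colD n a (j-1))) = true := by
      interval_cases n <;> decide
    intro a ha j hj hD hS
    have := H a ha j hj
    simp only [Bool.or_eq_true, Bool.and_eq_true, decide_eq_true_eq, hD, hS] at this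
    tauto
  · push_neg at hbig
    intro a ha j hj hD hS
    by_cases hj2 : j ≤ 2
    · -- head region
      have hm : n % 6 < 6 := Nat.mod_lt _ (by omega)
      have e0 : ∀ a', colD n a' j = Ehead (n % 6) a' j :=
        fun a' => colD_eq_Ehead (by omega) (by omega) (by omega)
      have e1 : ∀ a', colD n a' (j+1) = Ehead (n % 6) a' (j+1) :=
        fun a' => colD_eq_Ehead (by omega) (by omega) (by omega)
      have e2 : 0 < j → ∀ a', colD n a' (j-1) = Ehead (n % 6) a' (j-1) :=
        fun h a' => colD_eq_Ehead (by omega) (by omega) (by omega)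
      have hS' : decide (j = 0 ∧ ((n % 6 = 2 ∧ a = 3) ∨ (n % 6 = 5 ∧ a = 0))) = false := hS
      have hmain := Ehead_dom (n % 6) hm a ha j (by omega) (by rw [← e0]; exact hD) hS'
      simp only [Bool.or_eq_true, Bool.and_eq_true, decide_eq_true_eq] at hmain
      rcases hmain with ((h1 | h2) | h3) | ⟨hjpos, h4⟩
      · exact Or.inl (by rw [e0]; exact h1)
      · exact Or.inr (Or.inl (by rw [e0]; exact h2))
      · exact Or.inr (Or.inr (Or.inl ⟨by omega, by rw [e1]; exact h3⟩))
      · exact Or.inr (Or.inr (Or.inr ⟨hjpos, by rw [e2 hjpos]; exact h4⟩))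
    · -- generic region
      push_neg at hj2
      have hbl : (n - 1 - j) % 6 < 6 := Nat.mod_lt _ (by omega)
      have hmain := base6_dom a ha ((n - 1 - j) % 6) hbl
        (by rw [← colD_eq_base (by omega) (by omega)]; exact hD)
      simp only [Bool.or_eq_true, Bool.and_eq_true, decide_eq_true_eq] at hmain
      rcases hmain with ((h1 | h2) | ⟨hb0, h3⟩) | h4
      · exact Or.inl (by rw [colD_eq_base (by omega) (by omega)]; exact h1)
      · exact Or.inr (Or.inl (by rw [colD_eq_base (by omega) (by omega)]; exact h2))
      · refine Or.inr (Or.inr (Or.inl ⟨by omega, ?_⟩))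
        rw [colD_eq_base (by omega) (by omega)]
        have : (n - 1 - (j+1)) % 6 = ((n - 1 - j) % 6 + 5) % 6 := by omega
        rw [this]; exact h3
      · refine Or.inr (Or.inr (Or.inr ⟨by omega, ?_⟩))
        rw [colD_eq_base (by omega) (by omega)]
        have : (n - 1 - (j-1)) % 6 = ((n - 1 - j) % 6 + 1) % 6 := by omega
        rw [this]; exact h4

lemma sum_fin_mod6 (t : ℕ) (g : ℕ → ℕ) :
    ∑ i : Fin (6*t), g (i.val % 6) = t * ∑ a ∈ Finset.range 6, g a := by
  rw [Fin.sum_univ_eq_sum_range (fun i => g (i % 6))]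
  induction t with
  | zero => simp
  | succ t ih =>
    have h6 : 6 * (t+1) = 6*t+1+1+1+1+1+1 := by ring
    rw [h6, Finset.sum_range_succ, Finset.sum_range_succ, Finset.sum_range_succ,
        Finset.sum_range_succ, Finset.sum_range_succ, Finset.sum_range_succ, ih]
    rw [(by omega : (6*t+1+1+1+1+1) % 6 = 5), (by omega : (6*t+1+1+1+1) % 6 = 4),
        (by omega : (6*t+1+1+1) % 6 = 3), (by omega : (6*t+1+1) % 6 = 2),
        (by omega : (6*t+1) % 6 = 1), (by omega : (6*t) % 6 = 0)]
    have h5 : ∑ a ∈ Finset.range 6, g a = g 0 + g 1 + g 2 + g 3 + g 4 + g 5 := by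
      rw [show (6:ℕ) = 5+1 by norm_num, Finset.sum_range_succ,
          show (5:ℕ) = 4+1 by norm_num, Finset.sum_range_succ,
          show (4:ℕ) = 3+1 by norm_num, Finset.sum_range_succ,
          show (3:ℕ) = 2+1 by norm_num, Finset.sum_range_succ,
          show (2:ℕ) = 1+1 by norm_num, Finset.sum_range_succ,
          Finset.sum_range_one]
    rw [h5]; ring


lemma colD_eq_base' {n a j : ℕ} (hn : n ≠ 3) (h0 : ¬(n % 3 = 0 ∧ j = 0))
    (h1 : ¬(n % 3 = 0 ∧ j = 1)) :
    colD n a j = base6 a ((n - 1 - j) % 6) := by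
  unfold colD
  rw [if_neg hn, if_neg h0, if_neg h1]

lemma col_sum (k n : ℕ) (hn : 2 ≤ n) (h3 : n ≠ 3) : ∀ j < n,
    ∑ a ∈ Finset.range 6, (if colD n a j then k+1 else if colS n a j then k else 0)
      = (k+1) * (if (n-1-j) % 3 = 0 then 2 else 1)
        + (if j = 0 then (if n % 3 = 0 then k+1 else if n % 3 = 2 then k else 0) else 0) := by
  intro j hj
  by_cases hj0 : j = 0
  · subst hj0
    have hb : ∀ a, colD n a 0 = Ehead (n % 6) a 0 :=
      fun a => colD_eq_Ehead h3 (by omega) (by omega)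
    have h36 : n % 3 = n % 6 % 3 := (Nat.mod_mod_of_dvd n (by norm_num)).symm
    rcases (by omega : n % 6 = 0 ∨ n % 6 = 1 ∨ n % 6 = 2 ∨ n % 6 = 3 ∨ n % 6 = 4 ∨ n % 6 = 5)
      with h | h | h | h | h | h <;>
    · simp only [hb, h, colS, Finset.sum_range_succ, Finset.sum_range_one]
      norm_num [Ehead, base6]
      split_ifs <;> omega
  · have hcolS : ∀ a, colS n a j = false := by
      intro a; simp [colS, hj0]
    rw [if_neg hj0]
    by_cases hh : n % 3 = 0 ∧ j = 1
    · obtain ⟨hn3, hj1⟩ := hh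
      subst hj1
      have hD1 : ∀ a, colD n a 1
          = (if n % 6 = 0 then decide (a = 4) else decide (a = 1)) := by
        intro a; unfold colD
        rw [if_neg h3, if_neg (by rintro ⟨-, h⟩; omega), if_pos ⟨hn3, rfl⟩]
      rcases (by omega : n % 6 = 0 ∨ n % 6 = 3) with h | h <;>
      · simp only [hD1, h, hcolS, Finset.sum_range_succ, Finset.sum_range_one]
        norm_num
        omega
    · have hD : ∀ a, colD n a j = base6 a ((n-1-j) % 6) :=
        fun a => colD_eq_base' h3 (by rintro ⟨-, h⟩; omega) (fun hcc => hh hcc)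
      rw [show (n-1-j) % 3 = (n-1-j) % 6 % 3 from (Nat.mod_mod_of_dvd _ (by norm_num)).symm]
      rcases (by omega : (n-1-j) % 6 = 0 ∨ (n-1-j) % 6 = 1 ∨ (n-1-j) % 6 = 2 ∨
          (n-1-j) % 6 = 3 ∨ (n-1-j) % 6 = 4 ∨ (n-1-j) % 6 = 5) with h | h | h | h | h | h <;>
      · simp only [hD, h, hcolS, Finset.sum_range_succ, Finset.sum_range_one]
        norm_num [base6]
        all_goals first
          | omega
          | (split_ifs <;> omega)

lemma sum_if_mod3 (n : ℕ) :
    ∑ j ∈ Finset.range n, (if j % 3 = 0 then 2 else 1) = n + (n+2)/3 := by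
  induction n with
  | zero => simp
  | succ n ih =>
    rw [Finset.sum_range_succ, ih]
    rcases (by omega : n % 3 = 0 ∨ n % 3 = 1 ∨ n % 3 = 2) with h | h | h <;>
      simp [h] <;> omega

lemma total_col_sum (k n : ℕ) (hn : 2 ≤ n) :
    ∑ j ∈ Finset.range n, ∑ a ∈ Finset.range 6,
        (if colD n a j then k+1 else if colS n a j then k else 0)
      = (k+1) * (n + (n+2)/3)
        + (if n % 3 = 0 then k+1 else if n % 3 = 2 then k else 0) := by
  by_cases h3 : n = 3
  · subst h3
    simp only [Finset.sum_range_succ, Finset.sum_range_one]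
    norm_num [colD, colS, base6]
    omega
  · rw [Finset.sum_congr rfl (fun j hj => col_sum k n hn h3 j (Finset.mem_range.mp hj)),
        Finset.sum_add_distrib, ← Finset.mul_sum]
    have hrefl := Finset.sum_range_reflect (fun x => if x % 3 = 0 then (2:ℕ) else 1) n
    rw [hrefl, sum_if_mod3]
    rw [Finset.sum_ite_eq' (Finset.range n) 0
      (fun _ => if n % 3 = 0 then k+1 else if n % 3 = 2 then k else 0)]
    rw [if_pos (Finset.mem_range.mpr (by omega))]

lemma gammaKR_le {V : Type*} [Fintype V] (G : SimpleGraph V) (k : ℕ) {f : V → ℕ}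
    (hf : IsKRomanDF G k f) : gammaKR G k ≤ ∑ v, f v :=
  Nat.sInf_le ⟨f, hf, rfl⟩

lemma isKRomanDF_of_dom {V : Type*} [Fintype V] (G : SimpleGraph V) (k : ℕ) (hk : 1 ≤ k)
    (D S : V → Prop) [DecidablePred D] [DecidablePred S]
    (hdom : ∀ v, ¬ D v → ¬ S v → ∃ u, G.Adj v u ∧ D u) :
    IsKRomanDF G k (fun v => if D v then k + 1 else if S v then k else 0) := by
  set f : V → ℕ := fun v => if D v then k + 1 else if S v then k else 0 with hf
  constructor
  · intro v
    by_cases h1 : D v <;> by_cases h2 : S v <;> simp [hf, h1, h2] <;> omega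
  · intro v hv
    have hD : ¬ D v := by
      intro h; rw [hf] at hv; simp only [h, if_pos] at hv; omega
    have hS : ¬ S v := by
      intro h; rw [hf] at hv; simp only [hD, if_neg, h, if_pos, if_false] at hv; omega
    have hfv : f v = 0 := by simp [hf, hD, hS]
    obtain ⟨u, hadj, hDu⟩ := hdom v hD hS
    have hfu : f u = k + 1 := by simp [hf, hDu]
    set A := Finset.univ.filter (fun u => G.Adj v u ∧ 0 < f u) with hA
    have huA : u ∈ A := by
      rw [hA]; simp only [Finset.mem_filter, Finset.mem_univ, true_and]
      exact ⟨hadj, by omega⟩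
    have hsum : ∑ x ∈ Finset.univ.filter (fun u => G.Adj v u), f x = ∑ x ∈ A, f x := by
      rw [hA, ← Finset.filter_filter]
      exact (Finset.sum_filter_of_ne (fun x _ hx => Nat.pos_of_ne_zero hx)).symm
    have h3 : (A.erase u).card ≤ ∑ x ∈ A.erase u, f x := by
      have := Finset.card_nsmul_le_sum (A.erase u) f 1 (fun x hx => by
        have hx' := Finset.mem_of_mem_erase hx
        rw [hA] at hx'
        simp only [Finset.mem_filter] at hx'
        omega)
      simpa using this
    have h4 : ∑ x ∈ A.erase u, f x + f u = ∑ x ∈ A, f x := Finset.sum_erase_add A f huA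
    have hcard : (A.erase u).card = A.card - 1 := Finset.card_erase_of_mem huA
    have hAcard : 1 ≤ A.card := Finset.card_pos.mpr ⟨u, huA⟩
    rw [hfv, hsum]
    omega

theorem gammaKR_C6t (k t n : ℕ) (hk : 1 ≤ k) (ht : 1 ≤ t) (hn : 2 ≤ n) :
    (n % 3 = 0 →
      (gammaKR (cylGrid (6 * t) n) k : ℤ) ≤
        (t : ℤ) * (⌈(4 * (n : ℚ)) / 3⌉ * ((k : ℤ) + 1) + ((k : ℤ) + 1))) ∧
    (n % 3 = 1 →
      (gammaKR (cylGrid (6 * t) n) k : ℤ) ≤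
        (t : ℤ) * ⌈(4 * (n : ℚ)) / 3⌉ * ((k : ℤ) + 1)) ∧
    (n % 3 = 2 →
      (gammaKR (cylGrid (6 * t) n) k : ℤ) ≤
        (t : ℤ) * (⌈(4 * (n : ℚ)) / 3⌉ * ((k : ℤ) + 1) + (k : ℤ))) := by
  have h6t : 6 ≤ 6 * t := by omega
  haveI : NeZero (6 * t) := ⟨by omega⟩
  set G := cylGrid (6 * t) n with hG
  set D : Fin (6 * t) × Fin n → Prop :=
    (fun v => colD n (v.1.val % 6) v.2.val = true) with hD
  set S : Fin (6 * t) × Fin n → Prop :=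
    (fun v => colS n (v.1.val % 6) v.2.val = true) with hS
  letI instD : DecidablePred D :=
    fun v => (inferInstance : Decidable (colD n (v.1.val % 6) v.2.val = true))
  letI instS : DecidablePred S :=
    fun v => (inferInstance : Decidable (colS n (v.1.val % 6) v.2.val = true))
  have hdvd : (6:ℕ) ∣ 6 * t := ⟨t, rfl⟩
  have hdom : ∀ v, ¬ D v → ¬ S v → ∃ u, G.Adj v u ∧ D u := by
    rintro ⟨i, j⟩ hDv hSv
    have hi6 : i.val % 6 < 6 := Nat.mod_lt _ (by omega)
    have hmain := colD_dom hn (i.val % 6) hi6 j.val j.isLt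
      (by simpa [hD] using hDv) (by simpa [hS] using hSv)
    have hval1 : ((1 : Fin (6 * t)) : ℕ) = 1 := by
      rw [Fin.val_one', Nat.mod_eq_of_lt (by omega)]
    rcases hmain with h | h | ⟨hlt, h⟩ | ⟨hpos, h⟩
    · refine ⟨(i + 1, j), ?_, ?_⟩
      · refine Or.inl ⟨?_, rfl⟩
        rw [SimpleGraph.cycleGraph_adj']
        right
        rw [add_sub_cancel_left, hval1]
      · show colD n ((i + 1 : Fin (6 * t)).val % 6) j.val = true
        have e1 : (i + 1 : Fin (6 * t)).val = (i.val + 1) % (6 * t) := by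
          rw [Fin.add_def, hval1]
        have e2 : (i + 1 : Fin (6 * t)).val % 6 = (i.val % 6 + 1) % 6 := by
          rw [e1, Nat.mod_mod_of_dvd _ hdvd]; omega
        rw [e2]; exact h
    · refine ⟨(i - 1, j), ?_, ?_⟩
      · refine Or.inl ⟨?_, rfl⟩
        rw [SimpleGraph.cycleGraph_adj']
        left
        rw [sub_sub_cancel, hval1]
      · show colD n ((i - 1 : Fin (6 * t)).val % 6) j.val = true
        have e0 : (i - 1 : Fin (6 * t)) + 1 = i := by
          rw [sub_add_cancel]
        have e1 : ((i - 1 : Fin (6 * t)).val + 1) % (6 * t) = i.val := by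
          have := congrArg Fin.val e0
          rwa [Fin.add_def, hval1] at this
        have e2 : i.val % 6 = ((i - 1 : Fin (6 * t)).val + 1) % 6 := by
          conv_lhs => rw [← e1]
          rw [Nat.mod_mod_of_dvd _ hdvd]
        have e3 : (i - 1 : Fin (6 * t)).val % 6 = (i.val % 6 + 5) % 6 := by omega
        rw [e3]; exact h
    · refine ⟨(i, ⟨j.val + 1, hlt⟩), ?_, ?_⟩
      · exact Or.inr ⟨SimpleGraph.pathGraph_adj.mpr (Or.inl rfl), rfl⟩
      · exact h
    · refine ⟨(i, ⟨j.val - 1, by omega⟩), ?_, ?_⟩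
      · refine Or.inr ⟨SimpleGraph.pathGraph_adj.mpr (Or.inr ?_), rfl⟩
        show j.val - 1 + 1 = j.val
        omega
      · exact h
  have hKR := isKRomanDF_of_dom G k hk D S hdom
  have hle := gammaKR_le G k hKR
  -- compute the weight
  have hWeq : ∑ v : Fin (6 * t) × Fin n, (if D v then k + 1 else if S v then k else 0)
      = t * ((k+1) * (n + (n+2)/3)
          + (if n % 3 = 0 then k+1 else if n % 3 = 2 then k else 0)) := by
    have hpt : ∀ v : Fin (6 * t) × Fin n,
        (if D v then k + 1 else if S v then k else 0)
          = (if colD n (v.1.val % 6) v.2.val then k + 1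
             else if colS n (v.1.val % 6) v.2.val then k else 0) := by
      intro v
      by_cases hc : colD n (v.1.val % 6) v.2.val = true <;>
        by_cases hs : colS n (v.1.val % 6) v.2.val = true <;>
        simp [hD, hS, hc, hs]
    rw [Finset.sum_congr rfl (fun v _ => hpt v)]
    rw [Fintype.sum_prod_type_right]
    have hstep : (∑ y : Fin n, ∑ x : Fin (6 * t),
          (if colD n ((x, y).1.val % 6) (x, y).2.val then k + 1
           else if colS n ((x, y).1.val % 6) (x, y).2.val then k else 0))
        = ∑ y : Fin n, ∑ x : Fin (6 * t),
          (if colD n (x.val % 6) y.val then k + 1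
           else if colS n (x.val % 6) y.val then k else 0) := rfl
    rw [hstep]
    have hrow : ∀ j : Fin n,
        ∑ i : Fin (6 * t), (if colD n (i.val % 6) j.val then k + 1
            else if colS n (i.val % 6) j.val then k else 0)
          = t * ∑ a ∈ Finset.range 6, (if colD n a j.val then k + 1
              else if colS n a j.val then k else 0) := by
      intro j
      exact sum_fin_mod6 t (fun a => if colD n a j.val then k + 1
        else if colS n a j.val then k else 0)
    rw [Finset.sum_congr rfl (fun j _ => hrow j), ← Finset.mul_sum]
    congr 1
    rw [Fin.sum_univ_eq_sum_range (fun j => ∑ a ∈ Finset.range 6,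
      (if colD n a j then k + 1 else if colS n a j then k else 0))]
    exact total_col_sum k n hn
  have hle2 : gammaKR G k ≤ t * ((k+1) * (n + (n+2)/3)
      + (if n % 3 = 0 then k+1 else if n % 3 = 2 then k else 0)) :=
    le_of_le_of_eq hle hWeq
  have hceil : (⌈(4 * (n : ℚ)) / 3⌉ : ℤ) = ((4 * n + 2) / 3 : ℕ) := by
    set q : ℕ := (4 * n + 2) / 3 with hq
    have hq1 : 3 * q ≤ 4 * n + 2 := by omega
    have hq2 : 4 * n ≤ 3 * q := by omega
    have c1 : ((3 * q : ℕ) : ℚ) ≤ ((4 * n + 2 : ℕ) : ℚ) := by exact_mod_cast hq1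
    have c2 : ((4 * n : ℕ) : ℚ) ≤ ((3 * q : ℕ) : ℚ) := by exact_mod_cast hq2
    push_cast at c1 c2
    rw [Int.ceil_eq_iff]
    constructor
    · rw [lt_div_iff₀ (by norm_num : (0:ℚ) < 3)]
      push_cast
      linarith
    · rw [div_le_iff₀ (by norm_num : (0:ℚ) < 3)]
      push_cast
      linarith
  refine ⟨fun hm => ?_, fun hm => ?_, fun hm => ?_⟩
  · rw [hceil]
    have e : t * ((k+1) * (n + (n+2)/3)
          + (if n % 3 = 0 then k+1 else if n % 3 = 2 then k else 0))
        = t * ((4 * n + 2) / 3 * (k + 1) + (k + 1)) := by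
      rw [if_pos hm]
      have h0 : n + (n+2)/3 = (4 * n + 2) / 3 := by omega
      rw [h0]; ring
    rw [e] at hle2
    exact_mod_cast hle2
  · rw [hceil]
    have e : t * ((k+1) * (n + (n+2)/3)
          + (if n % 3 = 0 then k+1 else if n % 3 = 2 then k else 0))
        = t * ((4 * n + 2) / 3) * (k + 1) := by
      rw [if_neg (by omega), if_neg (by omega)]
      have h0 : n + (n+2)/3 = (4 * n + 2) / 3 := by omega
      rw [h0]; ring
    rw [e] at hle2
    exact_mod_cast hle2
  · rw [hceil]
    have e : t * ((k+1) * (n + (n+2)/3)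
          + (if n % 3 = 0 then k+1 else if n % 3 = 2 then k else 0))
        = t * ((4 * n + 2) / 3 * (k + 1) + k) := by
      rw [if_neg (by omega), if_pos hm]
      have h0 : n + (n+2)/3 = (4 * n + 2) / 3 := by omega
      rw [h0]; ring
    rw [e] at hle2
    exact_mod_cast hle2
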